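/- Let φ₀ ∈ [0, π/4) and let γ : [0,∞) → ℂ be continuously differentiable with γ(0) = 0 and γ'(t) = exp(i·φ(t)) for a continuous real function φ satisfying |φ(t)| ≤ φ₀ for all t. Then the function λ(s) = |γ(s)| is strictly increasing on [0,∞); in particular it is one-to-one. -/

import Mathlib

open Real Complex

theorem stmt_13 (φ₀ : ℝ) (hφ₀ : φ₀ ∈ Set.Ico 0 (Real.pi / 4))
    (γ : ℝ → ℂ) (φ : ℝ → ℝ)
    (hγ0 : γ 0 = 0)
    (hφcont : ContinuousOn φ (Set.Ici 0))
    (hderiv : ∀ t ∈ Set.Ici (0:ℝ), HasDerivAt γ (Complex.exp (Complex.I * (φ t))) t)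
    (hφbd : ∀ t ∈ Set.Ici (0:ℝ), |φ t| ≤ φ₀) :
    StrictMonoOn (fun s => ‖γ s‖) (Set.Ici 0) := by
  obtain ⟨hφ₀0, hφ₀lt⟩ := hφ₀
  have hpi := Real.pi_pos
  have hφ₀half : φ₀ < Real.pi / 2 := by linarith
  -- derivatives of real and imaginary parts
  have hRe : ∀ t ∈ Set.Ici (0:ℝ), HasDerivAt (fun u => (γ u).re) (Real.cos (φ t)) t := by
    intro t ht
    have h := (Complex.reCLM.hasFDerivAt.comp_hasDerivAt t (hderiv t ht))
    have : Complex.reCLM (Complex.exp (Complex.I * (φ t))) = Real.cos (φ t) := by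
      simp [mul_comm Complex.I, Complex.exp_ofReal_mul_I_re]
    rw [this] at h
    exact h
  have hIm : ∀ t ∈ Set.Ici (0:ℝ), HasDerivAt (fun u => (γ u).im) (Real.sin (φ t)) t := by
    intro t ht
    have h := (Complex.imCLM.hasFDerivAt.comp_hasDerivAt t (hderiv t ht))
    have : Complex.imCLM (Complex.exp (Complex.I * (φ t))) = Real.sin (φ t) := by
      simp [mul_comm Complex.I, Complex.exp_ofReal_mul_I_im]
    rw [this] at h
    exact h
  have hIci : interior (Set.Ici (0:ℝ)) = Set.Ioi 0 := interior_Ici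
  have hconv : Convex ℝ (Set.Ici (0:ℝ)) := convex_Ici 0
  have hcontRe : ContinuousOn (fun u => (γ u).re) (Set.Ici 0) :=
    fun t ht => (hRe t ht).continuousAt.continuousWithinAt
  have hcontIm : ContinuousOn (fun u => (γ u).im) (Set.Ici 0) :=
    fun t ht => (hIm t ht).continuousAt.continuousWithinAt
  have hdiffRe : DifferentiableOn ℝ (fun u => (γ u).re) (interior (Set.Ici (0:ℝ))) := by
    rw [hIci]; intro t ht
    exact (hRe t (Set.mem_Ici.mpr (le_of_lt (Set.mem_Ioi.mp ht)))).differentiableAt.differentiableWithinAt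
  have hdiffIm : DifferentiableOn ℝ (fun u => (γ u).im) (interior (Set.Ici (0:ℝ))) := by
    rw [hIci]; intro t ht
    exact (hIm t (Set.mem_Ici.mpr (le_of_lt (Set.mem_Ioi.mp ht)))).differentiableAt.differentiableWithinAt
  -- pointwise bounds on derivatives
  have hmem : ∀ t ∈ Set.Ici (0:ℝ), φ t ∈ Set.Icc (-(Real.pi/2)) (Real.pi/2) := by
    intro t ht
    have := hφbd t ht
    constructor
    · nlinarith [abs_le.mp this |>.1]
    · nlinarith [abs_le.mp this |>.2]
  have hmemφ₀ : φ₀ ∈ Set.Icc (-(Real.pi/2)) (Real.pi/2) := by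
    constructor <;> nlinarith
  have hcoslb : ∀ t ∈ Set.Ici (0:ℝ), Real.cos φ₀ ≤ Real.cos (φ t) := by
    intro t ht
    rw [← Real.cos_abs (φ t)]
    exact Real.cos_le_cos_of_nonneg_of_le_pi (abs_nonneg _) (by linarith) (hφbd t ht)
  have hsinub : ∀ t ∈ Set.Ici (0:ℝ), Real.sin (φ t) ≤ Real.sin φ₀ := by
    intro t ht
    exact Real.strictMonoOn_sin.monotoneOn (hmem t ht) hmemφ₀ (abs_le.mp (hφbd t ht)).2
  have hsinlb : ∀ t ∈ Set.Ici (0:ℝ), -Real.sin φ₀ ≤ Real.sin (φ t) := by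
    intro t ht
    have := Real.strictMonoOn_sin.monotoneOn
      (by constructor <;> [linarith [hmemφ₀.1]; linarith [hmemφ₀.2, hφ₀0]] :
        -φ₀ ∈ Set.Icc (-(Real.pi/2)) (Real.pi/2))
      (hmem t ht) (by linarith [(abs_le.mp (hφbd t ht)).1])
    rwa [Real.sin_neg] at this
  -- increment bounds via mean value theorem
  have hReIncr : ∀ x ∈ Set.Ici (0:ℝ), ∀ y ∈ Set.Ici (0:ℝ), x ≤ y →
      Real.cos φ₀ * (y - x) ≤ (γ y).re - (γ x).re := by
    apply hconv.mul_sub_le_image_sub_of_le_deriv hcontRe hdiffRe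
    intro t ht
    rw [hIci] at ht
    rw [(hRe t (Set.mem_Ici.mpr (le_of_lt (Set.mem_Ioi.mp ht)))).deriv]
    exact hcoslb t (Set.mem_Ici.mpr (le_of_lt (Set.mem_Ioi.mp ht)))
  have hImUb : ∀ x ∈ Set.Ici (0:ℝ), ∀ y ∈ Set.Ici (0:ℝ), x ≤ y →
      (γ y).im - (γ x).im ≤ Real.sin φ₀ * (y - x) := by
    apply hconv.image_sub_le_mul_sub_of_deriv_le hcontIm hdiffIm
    intro t ht
    rw [hIci] at ht
    rw [(hIm t (Set.mem_Ici.mpr (le_of_lt (Set.mem_Ioi.mp ht)))).deriv]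
    exact hsinub t (Set.mem_Ici.mpr (le_of_lt (Set.mem_Ioi.mp ht)))
  have hImLb : ∀ x ∈ Set.Ici (0:ℝ), ∀ y ∈ Set.Ici (0:ℝ), x ≤ y →
      (-Real.sin φ₀) * (y - x) ≤ (γ y).im - (γ x).im := by
    apply hconv.mul_sub_le_image_sub_of_le_deriv hcontIm hdiffIm
    intro t ht
    rw [hIci] at ht
    rw [(hIm t (Set.mem_Ici.mpr (le_of_lt (Set.mem_Ioi.mp ht)))).deriv]
    exact hsinlb t (Set.mem_Ici.mpr (le_of_lt (Set.mem_Ioi.mp ht)))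
  -- trig inequalities
  have hsin0 : 0 ≤ Real.sin φ₀ := Real.sin_nonneg_of_nonneg_of_le_pi hφ₀0 (by linarith)
  have hsincos : Real.sin φ₀ < Real.cos φ₀ := by
    rw [← Real.sin_pi_div_two_sub]
    exact Real.strictMonoOn_sin hmemφ₀
      (by constructor <;> nlinarith) (by linarith)
  -- main argument
  intro a ha b hb hab
  have hb' : b ∈ Set.Ici (0:ℝ) := hb
  have h0 : (0:ℝ) ∈ Set.Ici (0:ℝ) := Set.self_mem_Ici
  have h1 := hReIncr 0 h0 a ha ha
  have h2 := hReIncr a ha b hb (le_of_lt hab)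
  have h3u := hImUb 0 h0 a ha ha
  have h3l := hImLb 0 h0 a ha ha
  have h4u := hImUb a ha b hb (le_of_lt hab)
  have h4l := hImLb a ha b hb (le_of_lt hab)
  rw [hγ0] at h1 h3u h3l
  simp only [Complex.zero_re, Complex.zero_im, sub_zero] at h1 h3u h3l
  set ra := (γ a).re with hra
  set rb := (γ b).re with hrb
  set ia := (γ a).im with hia
  set ib := (γ b).im with hib
  have hsq : (‖γ a‖)^2 < (‖γ b‖)^2 := by
    rw [Complex.sq_norm, Complex.sq_norm, Complex.normSq_apply, Complex.normSq_apply,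
      ← hra, ← hrb, ← hia, ← hib]
    have hca : 0 < Real.cos φ₀ := lt_of_le_of_lt hsin0 hsincos
    have hba : 0 < b - a := by linarith
    set c := Real.cos φ₀
    set s := Real.sin φ₀
    have e2 : -(a*(b-a)*s^2) ≤ ia*(ib-ia) := by
      linarith [mul_nonneg (by linarith : (0:ℝ) ≤ a * s + ia)
          (by linarith : (0:ℝ) ≤ (b - a) * s + (ib - ia)),
        mul_nonneg (by linarith : (0:ℝ) ≤ a * s - ia)
          (by linarith : (0:ℝ) ≤ (b - a) * s - (ib - ia))]
    have e1 : a*(b-a)*c^2 ≤ ra*(rb-ra) := by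
      linarith [mul_nonneg (by linarith : (0:ℝ) ≤ ra - c * a)
          (by linarith : (0:ℝ) ≤ rb - ra - c * (b - a)),
        mul_nonneg (mul_nonneg hca.le ha)
          (by linarith : (0:ℝ) ≤ rb - ra - c * (b - a)),
        mul_nonneg (by linarith : (0:ℝ) ≤ ra - c * a)
          (mul_nonneg hca.le hba.le)]
    have hcba : (0:ℝ) ≤ c * (b - a) := mul_nonneg hca.le hba.le
    have e3 : c^2*(b-a)^2 ≤ (rb-ra)^2 := by
      linarith [mul_nonneg (by linarith : (0:ℝ) ≤ rb - ra - c * (b - a))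
          (by linarith : (0:ℝ) ≤ rb - ra + c * (b - a))]
    have hcs2 : (0:ℝ) ≤ c^2 - s^2 := by
      have := mul_nonneg (by linarith : (0:ℝ) ≤ c - s) (by linarith : (0:ℝ) ≤ c + s)
      nlinarith [this]
    have e4 : (0:ℝ) ≤ a*(b-a)*(c^2 - s^2) := mul_nonneg (mul_nonneg ha hba.le) hcs2
    have e5 : (0:ℝ) < c^2*(b-a)^2 := by positivity
    have expand : rb^2 + ib^2 - (ra^2 + ia^2) =
        2*(ra*(rb-ra)) + (rb-ra)^2 + 2*(ia*(ib-ia)) + (ib-ia)^2 := by ring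
    linarith [e1, e2, e3, e4, e5, sq_nonneg (ib - ia), expand]
  exact lt_of_pow_lt_pow_left₀ 2 (norm_nonneg _) hsq
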